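/- For every n ≥ 4, the root system of type D_n, realized as {±e_i ± e_j : 1 ≤ i < j ≤ n} ⊆ ℤ^n, admits no partition into m ≥ 3 nonempty parts Δ_1, …, Δ_m such that each Δ_i and each Δ_i ⊔ Δ_j is closed. -/
import Mathlib


/-- Standard basis vector `e i` in `ℤ^n`. -/
def eb {n : ℕ} (i : Fin n) : Fin n → ℤ := fun k => if k = i then 1 else 0

/-- A subset `S` of a root system `Δ` is closed if `α, β ∈ S` and `α + β ∈ Δ`
imply `α + β ∈ S`. -/
def RootClosed {n : ℕ} (Δ S : Set (Fin n → ℤ)) : Prop :=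
  ∀ a ∈ S, ∀ b ∈ S, a + b ∈ Δ → a + b ∈ S

/-- The root system of type `D_n`: the vectors `±e_i ± e_j` for `i < j`. -/
def rootsD (n : ℕ) : Set (Fin n → ℤ) :=
  {v | ∃ i j, i < j ∧ (v = eb i + eb j ∨ v = eb i - eb j ∨
                       v = -eb i + eb j ∨ v = -eb i - eb j)}

def rr {n : ℕ} (a : ℤ) (i : Fin n) (b : ℤ) (j : Fin n) : Fin n → ℤ :=
  fun k => (if k = i then a else 0) + (if k = j then b else 0)

lemma rr_comm {n : ℕ} (a : ℤ) (i : Fin n) (b : ℤ) (j : Fin n) : rr a i b j = rr b j a i := by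
  funext k; simp only [rr]; ring

lemma rr_add {n : ℕ} (a b b' c : ℤ) (i j k : Fin n) (h : b + b' = 0) :
    rr a i b j + rr b' j c k = rr a i c k := by
  funext m
  simp only [rr, Pi.add_apply]
  split_ifs <;> linarith

lemma rr_neg {n : ℕ} (a : ℤ) (i : Fin n) (b : ℤ) (j : Fin n) : -(rr a i b j) = rr (-a) i (-b) j := by
  funext k; simp only [rr, Pi.neg_apply]; split_ifs <;> ring

lemma eq_rr1 {n : ℕ} (i j : Fin n) : eb i + eb j = rr 1 i 1 j := by funext k; rfl
lemma eq_rr2 {n : ℕ} (i j : Fin n) : eb i - eb j = rr 1 i (-1) j := by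
  funext k; simp only [rr, eb, Pi.sub_apply]; split_ifs <;> ring
lemma eq_rr3 {n : ℕ} (i j : Fin n) : -eb i + eb j = rr (-1) i 1 j := by
  funext k; simp only [rr, eb, Pi.add_apply, Pi.neg_apply]; split_ifs <;> ring
lemma eq_rr4 {n : ℕ} (i j : Fin n) : -eb i - eb j = rr (-1) i (-1) j := by
  funext k; simp only [rr, eb, Pi.sub_apply, Pi.neg_apply]; split_ifs <;> ring

lemma mem_rootsD {n : ℕ} {i j : Fin n} (h : i ≠ j) {a b : ℤ}
    (ha : a = 1 ∨ a = -1) (hb : b = 1 ∨ b = -1) : rr a i b j ∈ rootsD n := by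
  rcases lt_or_gt_of_ne h with hij | hij
  · rcases ha with rfl | rfl <;> rcases hb with rfl | rfl
    · exact ⟨i, j, hij, Or.inl (eq_rr1 i j).symm⟩
    · exact ⟨i, j, hij, Or.inr (Or.inl (eq_rr2 i j).symm)⟩
    · exact ⟨i, j, hij, Or.inr (Or.inr (Or.inl (eq_rr3 i j).symm))⟩
    · exact ⟨i, j, hij, Or.inr (Or.inr (Or.inr (eq_rr4 i j).symm))⟩
  · rw [rr_comm]
    rcases hb with rfl | rfl <;> rcases ha with rfl | rfl
    · exact ⟨j, i, hij, Or.inl (eq_rr1 j i).symm⟩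
    · exact ⟨j, i, hij, Or.inr (Or.inl (eq_rr2 j i).symm)⟩
    · exact ⟨j, i, hij, Or.inr (Or.inr (Or.inl (eq_rr3 j i).symm))⟩
    · exact ⟨j, i, hij, Or.inr (Or.inr (Or.inr (eq_rr4 j i).symm))⟩

lemma rootsD_repr {n : ℕ} {v : Fin n → ℤ} (hv : v ∈ rootsD n) :
    ∃ (i j : Fin n) (a b : ℤ), i ≠ j ∧ (a = 1 ∨ a = -1) ∧ (b = 1 ∨ b = -1) ∧ v = rr a i b j := by
  obtain ⟨i, j, hij, h⟩ := hv
  rcases h with rfl | rfl | rfl | rfl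
  · exact ⟨i, j, 1, 1, hij.ne, Or.inl rfl, Or.inl rfl, eq_rr1 i j⟩
  · exact ⟨i, j, 1, -1, hij.ne, Or.inl rfl, Or.inr rfl, eq_rr2 i j⟩
  · exact ⟨i, j, -1, 1, hij.ne, Or.inr rfl, Or.inl rfl, eq_rr3 i j⟩
  · exact ⟨i, j, -1, -1, hij.ne, Or.inr rfl, Or.inr rfl, eq_rr4 i j⟩

lemma neg_mem_rootsD {n : ℕ} {v : Fin n → ℤ} (hv : v ∈ rootsD n) : -v ∈ rootsD n := by
  obtain ⟨i, j, a, b, hij, ha, hb, rfl⟩ := rootsD_repr hv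
  rw [rr_neg]
  exact mem_rootsD hij (by omega) (by omega)

lemma exists_other {n : ℕ} (hn : 3 ≤ n) (i j : Fin n) : ∃ m : Fin n, m ≠ i ∧ m ≠ j := by
  by_contra h
  push_neg at h
  have hsub : (Finset.univ : Finset (Fin n)) ⊆ {i, j} := by
    intro m _
    by_cases h1 : m = i
    · simp [h1]
    · simp [h m h1]
  have hc := Finset.card_le_card hsub
  have h2 : ({i, j} : Finset (Fin n)).card ≤ 2 := Finset.card_insert_le _ _ |>.trans (by simp)
  simp [Finset.card_univ] at hc
  omega

lemma exists_fourth {n : ℕ} (hn : 4 ≤ n) (i j k : Fin n) : ∃ m : Fin n, m ≠ i ∧ m ≠ j ∧ m ≠ k := by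
  by_contra h
  push_neg at h
  have hsub : (Finset.univ : Finset (Fin n)) ⊆ {i, j, k} := by
    intro m _
    by_cases h1 : m = i
    · simp [h1]
    · by_cases h2 : m = j
      · simp [h2]
      · simp [h m h1 h2]
  have hc := Finset.card_le_card hsub
  have h2 : ({i, j, k} : Finset (Fin n)).card ≤ 3 :=
    (Finset.card_insert_le _ _).trans (by
      have := Finset.card_insert_le j ({k} : Finset (Fin n)); simp at this ⊢; omega)
  simp [Finset.card_univ] at hc
  omega

lemma tri {n : ℕ} {f : (Fin n → ℤ) → ℕ}
    (hR : ∀ p q, p ∈ rootsD n → q ∈ rootsD n → p + q ∈ rootsD n →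
      f (p + q) = f p ∨ f (p + q) = f q)
    {i j k : Fin n} (hij : i ≠ j) (hjk : j ≠ k) (hik : i ≠ k)
    {a b b' c : ℤ} (ha : a = 1 ∨ a = -1) (hb : b = 1 ∨ b = -1) (hc : c = 1 ∨ c = -1)
    (hbb' : b + b' = 0) :
    f (rr a i c k) = f (rr a i b j) ∨ f (rr a i c k) = f (rr b' j c k) := by
  have hb' : b' = 1 ∨ b' = -1 := by omega
  have h1 : rr a i b j ∈ rootsD n := mem_rootsD hij ha hb
  have h2 : rr b' j c k ∈ rootsD n := mem_rootsD hjk hb' hc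
  have h3 : rr a i c k ∈ rootsD n := mem_rootsD hik ha hc
  have hsum : rr a i b j + rr b' j c k = rr a i c k := rr_add a b b' c i j k hbb'
  have := hR _ _ h1 h2 (by rw [hsum]; exact h3)
  rwa [hsum] at this

lemma core {n : ℕ} {f : (Fin n → ℤ) → ℕ}
    (hR : ∀ p q, p ∈ rootsD n → q ∈ rootsD n → p + q ∈ rootsD n →
      f (p + q) = f p ∨ f (p + q) = f q)
    {i j k d : Fin n} (hij : i ≠ j) (hik : i ≠ k) (hid : i ≠ d)
    (hjk : j ≠ k) (hjd : j ≠ d) (hkd : k ≠ d)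
    {s t u : ℤ} (hs : s = 1 ∨ s = -1) (ht : t = 1 ∨ t = -1) (hu : u = 1 ∨ u = -1)
    {A B C : ℕ}
    (hA : f (rr s i t j) = A) (hB : f (rr (-s) i (-t) j) = B) (hC : f (rr (-t) j u k) = C)
    (hAB : A ≠ B) (hAC : A ≠ C) (hBC : B ≠ C)
    (himg : ∀ v, f v = A ∨ f v = B ∨ f v = C) : False := by
  have hs' : -s = 1 ∨ -s = -1 := by omega
  have ht' : -t = 1 ∨ -t = -1 := by omega
  have hu' : -u = 1 ∨ -u = -1 := by omega
  have hone : (1:ℤ) = 1 ∨ (1:ℤ) = -1 := Or.inl rfl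
  have hmone : (-1:ℤ) = 1 ∨ (-1:ℤ) = -1 := Or.inr rfl
  have e1 : f (rr (-t) j u k) = f (rr (-t) j (-s) i) ∨ f (rr (-t) j u k) = f (rr s i u k) :=
    tri hR (Ne.symm hij) hik hjk ht' hs' hu (by ring)
  rw [show (rr (-t) j (-s) i : Fin n → ℤ) = rr (-s) i (-t) j from rr_comm _ _ _ _] at e1
  have e2 : f (rr s i u k) = C := e1.elim (fun h => absurd (hB.symm.trans (h.symm.trans hC)) hBC) (fun h => h.symm.trans hC)
  have e3 : f (rr s i t j) = f (rr s i u k) ∨ f (rr s i t j) = f (rr (-u) k t j) :=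
    tri hR hik (Ne.symm hjk) hij hs hu ht (by ring)
  rw [show (rr (-u) k t j : Fin n → ℤ) = rr t j (-u) k from rr_comm _ _ _ _] at e3
  have e4 : f (rr t j (-u) k) = A := e3.elim (fun h => absurd (e2.symm.trans (h.symm.trans hA)) (Ne.symm hAC)) (fun h => h.symm.trans hA)
  have e5 : f (rr (-s) i (-t) j) = f (rr (-s) i (-u) k) ∨ f (rr (-s) i (-t) j) = f (rr u k (-t) j) :=
    tri hR hik (Ne.symm hjk) hij hs' hu' ht' (by ring)
  rw [show (rr u k (-t) j : Fin n → ℤ) = rr (-t) j u k from rr_comm _ _ _ _] at e5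
  have e6 : f (rr (-s) i (-u) k) = B := e5.elim (fun h => h.symm.trans hB) (fun h => absurd (hC.symm.trans (h.symm.trans hB)) (Ne.symm hBC))
  rcases himg (rr s i (-t) j) with e7 | e7 | e7
  ·
    have e8 : f (rr (-t) j u k) = f (rr (-t) j s i) ∨ f (rr (-t) j u k) = f (rr (-s) i u k) :=
      tri hR (Ne.symm hij) hik hjk ht' hs hu (by ring)
    rw [show (rr (-t) j s i : Fin n → ℤ) = rr s i (-t) j from rr_comm _ _ _ _] at e8
    have e9 : f (rr (-s) i u k) = C := e8.elim (fun h => absurd (e7.symm.trans (h.symm.trans hC)) hAC) (fun h => h.symm.trans hC)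
    have e10 : f (rr s i (-t) j) = f (rr s i u k) ∨ f (rr s i (-t) j) = f (rr (-u) k (-t) j) :=
      tri hR hik (Ne.symm hjk) hij hs hu ht' (by ring)
    rw [show (rr (-u) k (-t) j : Fin n → ℤ) = rr (-t) j (-u) k from rr_comm _ _ _ _] at e10
    have e11 : f (rr (-t) j (-u) k) = A := e10.elim (fun h => absurd (e2.symm.trans (h.symm.trans e7)) (Ne.symm hAC)) (fun h => h.symm.trans e7)
    have e12 : f (rr (-s) i (-t) j) = f (rr (-s) i u k) ∨ f (rr (-s) i (-t) j) = f (rr (-u) k (-t) j) :=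
      tri hR hik (Ne.symm hjk) hij hs' hu ht' (by ring)
    rw [show (rr (-u) k (-t) j : Fin n → ℤ) = rr (-t) j (-u) k from rr_comm _ _ _ _] at e12
    exact e12.elim (fun h => absurd (e9.symm.trans (h.symm.trans hB)) (Ne.symm hBC)) (fun h => absurd (e11.symm.trans (h.symm.trans hB)) hAB)
  ·
    have e13 : f (rr s i u k) = f (rr s i (-t) j) ∨ f (rr s i u k) = f (rr t j u k) :=
      tri hR hij hjk hik hs ht' hu (by ring)
    have e14 : f (rr t j u k) = C := e13.elim (fun h => absurd (e7.symm.trans (h.symm.trans e2)) hBC) (fun h => h.symm.trans e2)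
    have e15 : f (rr s i t j) = f (rr s i (-u) k) ∨ f (rr s i t j) = f (rr u k t j) :=
      tri hR hik (Ne.symm hjk) hij hs hu' ht (by ring)
    rw [show (rr u k t j : Fin n → ℤ) = rr t j u k from rr_comm _ _ _ _] at e15
    have e16 : f (rr s i (-u) k) = A := e15.elim (fun h => h.symm.trans hA) (fun h => absurd (e14.symm.trans (h.symm.trans hA)) (Ne.symm hAC))
    have e17 : f (rr s i (-t) j) = f (rr s i (-u) k) ∨ f (rr s i (-t) j) = f (rr u k (-t) j) :=
      tri hR hik (Ne.symm hjk) hij hs hu' ht' (by ring)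
    rw [show (rr u k (-t) j : Fin n → ℤ) = rr (-t) j u k from rr_comm _ _ _ _] at e17
    exact e17.elim (fun h => absurd (e16.symm.trans (h.symm.trans e7)) hAB) (fun h => absurd (hC.symm.trans (h.symm.trans e7)) (Ne.symm hBC))
  ·
    rcases himg (rr (-u) k 1 d) with e18 | e18 | e18
    ·
      have e19 : f (rr (-u) k 1 d) = f (rr (-u) k (-s) i) ∨ f (rr (-u) k 1 d) = f (rr s i 1 d) :=
        tri hR (Ne.symm hik) hid hkd hu' hs' hone (by ring)
      rw [show (rr (-u) k (-s) i : Fin n → ℤ) = rr (-s) i (-u) k from rr_comm _ _ _ _] at e19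
      have e20 : f (rr s i 1 d) = A := e19.elim (fun h => absurd (e6.symm.trans (h.symm.trans e18)) (Ne.symm hAB)) (fun h => h.symm.trans e18)
      have e21 : f (rr s i (-t) j) = f (rr s i 1 d) ∨ f (rr s i (-t) j) = f (rr (-1) d (-t) j) :=
        tri hR hid (Ne.symm hjd) hij hs hone ht' (by ring)
      rw [show (rr (-1) d (-t) j : Fin n → ℤ) = rr (-t) j (-1) d from rr_comm _ _ _ _] at e21
      have e22 : f (rr (-t) j (-1) d) = C := e21.elim (fun h => absurd (e20.symm.trans (h.symm.trans e7)) hAC) (fun h => h.symm.trans e7)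
      have e23 : f (rr s i u k) = f (rr s i 1 d) ∨ f (rr s i u k) = f (rr (-1) d u k) :=
        tri hR hid (Ne.symm hkd) hik hs hone hu (by ring)
      rw [show (rr (-1) d u k : Fin n → ℤ) = rr u k (-1) d from rr_comm _ _ _ _] at e23
      have e24 : f (rr u k (-1) d) = C := e23.elim (fun h => absurd (e20.symm.trans (h.symm.trans e2)) hAC) (fun h => h.symm.trans e2)
      have e25 : f (rr (-s) i (-u) k) = f (rr (-s) i (-1) d) ∨ f (rr (-s) i (-u) k) = f (rr 1 d (-u) k) :=
        tri hR hid (Ne.symm hkd) hik hs' hmone hu' (by ring)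
      rw [show (rr 1 d (-u) k : Fin n → ℤ) = rr (-u) k 1 d from rr_comm _ _ _ _] at e25
      have e26 : f (rr (-s) i (-1) d) = B := e25.elim (fun h => h.symm.trans e6) (fun h => absurd (e18.symm.trans (h.symm.trans e6)) hAB)
      have e27 : f (rr s i 1 d) = f (rr s i (-t) j) ∨ f (rr s i 1 d) = f (rr t j 1 d) :=
        tri hR hij hjd hid hs ht' hone (by ring)
      have e28 : f (rr t j 1 d) = A := e27.elim (fun h => absurd (e7.symm.trans (h.symm.trans e20)) (Ne.symm hAC)) (fun h => h.symm.trans e20)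
      have e29 : f (rr (-s) i (-1) d) = f (rr (-s) i t j) ∨ f (rr (-s) i (-1) d) = f (rr (-t) j (-1) d) :=
        tri hR hij hjd hid hs' ht hmone (by ring)
      have e30 : f (rr (-s) i t j) = B := e29.elim (fun h => h.symm.trans e26) (fun h => absurd (e22.symm.trans (h.symm.trans e26)) (Ne.symm hBC))
      have e31 : f (rr (-s) i t j) = f (rr (-s) i u k) ∨ f (rr (-s) i t j) = f (rr (-u) k t j) :=
        tri hR hik (Ne.symm hjk) hij hs' hu ht (by ring)
      rw [show (rr (-u) k t j : Fin n → ℤ) = rr t j (-u) k from rr_comm _ _ _ _] at e31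
      have e32 : f (rr (-s) i u k) = B := e31.elim (fun h => h.symm.trans e30) (fun h => absurd (e4.symm.trans (h.symm.trans e30)) hAB)
      rcases himg (rr t j u k) with e33 | e33 | e33
      ·
        have e34 : f (rr t j u k) = f (rr t j (-s) i) ∨ f (rr t j u k) = f (rr s i u k) :=
          tri hR (Ne.symm hij) hik hjk ht hs' hu (by ring)
        rw [show (rr t j (-s) i : Fin n → ℤ) = rr (-s) i t j from rr_comm _ _ _ _] at e34
        exact e34.elim (fun h => absurd (e30.symm.trans (h.symm.trans e33)) (Ne.symm hAB)) (fun h => absurd (e2.symm.trans (h.symm.trans e33)) (Ne.symm hAC))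
      ·
        have e35 : f (rr t j u k) = f (rr t j 1 d) ∨ f (rr t j u k) = f (rr (-1) d u k) :=
          tri hR hjd (Ne.symm hkd) hjk ht hone hu (by ring)
        rw [show (rr (-1) d u k : Fin n → ℤ) = rr u k (-1) d from rr_comm _ _ _ _] at e35
        exact e35.elim (fun h => absurd (e28.symm.trans (h.symm.trans e33)) hAB) (fun h => absurd (e24.symm.trans (h.symm.trans e33)) (Ne.symm hBC))
      ·
        have e36 : f (rr t j u k) = f (rr t j s i) ∨ f (rr t j u k) = f (rr (-s) i u k) :=
          tri hR (Ne.symm hij) hik hjk ht hs hu (by ring)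
        rw [show (rr t j s i : Fin n → ℤ) = rr s i t j from rr_comm _ _ _ _] at e36
        exact e36.elim (fun h => absurd (hA.symm.trans (h.symm.trans e33)) hAC) (fun h => absurd (e32.symm.trans (h.symm.trans e33)) hBC)
    ·
      have e37 : f (rr (-u) k 1 d) = f (rr (-u) k t j) ∨ f (rr (-u) k 1 d) = f (rr (-t) j 1 d) :=
        tri hR (Ne.symm hjk) hjd hkd hu' ht hone (by ring)
      rw [show (rr (-u) k t j : Fin n → ℤ) = rr t j (-u) k from rr_comm _ _ _ _] at e37
      have e38 : f (rr (-t) j 1 d) = B := e37.elim (fun h => absurd (e4.symm.trans (h.symm.trans e18)) hAB) (fun h => h.symm.trans e18)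
      have e39 : f (rr t j (-u) k) = f (rr t j (-1) d) ∨ f (rr t j (-u) k) = f (rr 1 d (-u) k) :=
        tri hR hjd (Ne.symm hkd) hjk ht hmone hu' (by ring)
      rw [show (rr 1 d (-u) k : Fin n → ℤ) = rr (-u) k 1 d from rr_comm _ _ _ _] at e39
      have e40 : f (rr t j (-1) d) = A := e39.elim (fun h => h.symm.trans e4) (fun h => absurd (e18.symm.trans (h.symm.trans e4)) (Ne.symm hAB))
      have e41 : f (rr s i (-t) j) = f (rr s i (-1) d) ∨ f (rr s i (-t) j) = f (rr 1 d (-t) j) :=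
        tri hR hid (Ne.symm hjd) hij hs hmone ht' (by ring)
      rw [show (rr 1 d (-t) j : Fin n → ℤ) = rr (-t) j 1 d from rr_comm _ _ _ _] at e41
      have e42 : f (rr s i (-1) d) = C := e41.elim (fun h => h.symm.trans e7) (fun h => absurd (e38.symm.trans (h.symm.trans e7)) hBC)
      have e43 : f (rr t j (-1) d) = f (rr t j (-s) i) ∨ f (rr t j (-1) d) = f (rr s i (-1) d) :=
        tri hR (Ne.symm hij) hid hjd ht hs' hmone (by ring)
      rw [show (rr t j (-s) i : Fin n → ℤ) = rr (-s) i t j from rr_comm _ _ _ _] at e43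
      have e44 : f (rr (-s) i t j) = A := e43.elim (fun h => h.symm.trans e40) (fun h => absurd (e42.symm.trans (h.symm.trans e40)) (Ne.symm hAC))
      have e45 : f (rr (-s) i (-u) k) = f (rr (-s) i t j) ∨ f (rr (-s) i (-u) k) = f (rr (-t) j (-u) k) :=
        tri hR hij hjk hik hs' ht hu' (by ring)
      have e46 : f (rr (-t) j (-u) k) = B := e45.elim (fun h => absurd (e44.symm.trans (h.symm.trans e6)) hAB) (fun h => h.symm.trans e6)
      rcases himg (rr s i (-u) k) with e47 | e47 | e47
      ·
        have e48 : f (rr s i (-u) k) = f (rr s i (-1) d) ∨ f (rr s i (-u) k) = f (rr 1 d (-u) k) :=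
          tri hR hid (Ne.symm hkd) hik hs hmone hu' (by ring)
        rw [show (rr 1 d (-u) k : Fin n → ℤ) = rr (-u) k 1 d from rr_comm _ _ _ _] at e48
        exact e48.elim (fun h => absurd (e42.symm.trans (h.symm.trans e47)) (Ne.symm hAC)) (fun h => absurd (e18.symm.trans (h.symm.trans e47)) (Ne.symm hAB))
      ·
        have e49 : f (rr s i (-u) k) = f (rr s i (-t) j) ∨ f (rr s i (-u) k) = f (rr t j (-u) k) :=
          tri hR hij hjk hik hs ht' hu' (by ring)
        exact e49.elim (fun h => absurd (e7.symm.trans (h.symm.trans e47)) (Ne.symm hBC)) (fun h => absurd (e4.symm.trans (h.symm.trans e47)) hAB)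
      ·
        have e50 : f (rr s i (-u) k) = f (rr s i t j) ∨ f (rr s i (-u) k) = f (rr (-t) j (-u) k) :=
          tri hR hij hjk hik hs ht hu' (by ring)
        exact e50.elim (fun h => absurd (hA.symm.trans (h.symm.trans e47)) hAC) (fun h => absurd (e46.symm.trans (h.symm.trans e47)) hBC)
    ·
      have e51 : f (rr s i 1 d) = f (rr s i u k) ∨ f (rr s i 1 d) = f (rr (-u) k 1 d) :=
        tri hR hik hkd hid hs hu hone (by ring)
      have e52 : f (rr s i 1 d) = C := e51.elim (fun h => h.trans e2) (fun h => h.trans e18)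
      have e53 : f (rr s i t j) = f (rr s i 1 d) ∨ f (rr s i t j) = f (rr (-1) d t j) :=
        tri hR hid (Ne.symm hjd) hij hs hone ht (by ring)
      rw [show (rr (-1) d t j : Fin n → ℤ) = rr t j (-1) d from rr_comm _ _ _ _] at e53
      have e54 : f (rr t j (-1) d) = A := e53.elim (fun h => absurd (e52.symm.trans (h.symm.trans hA)) (Ne.symm hAC)) (fun h => h.symm.trans hA)
      have e55 : f (rr (-s) i (-u) k) = f (rr (-s) i (-1) d) ∨ f (rr (-s) i (-u) k) = f (rr 1 d (-u) k) :=
        tri hR hid (Ne.symm hkd) hik hs' hmone hu' (by ring)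
      rw [show (rr 1 d (-u) k : Fin n → ℤ) = rr (-u) k 1 d from rr_comm _ _ _ _] at e55
      have e56 : f (rr (-s) i (-1) d) = B := e55.elim (fun h => h.symm.trans e6) (fun h => absurd (e18.symm.trans (h.symm.trans e6)) (Ne.symm hBC))
      rcases himg (rr (-s) i t j) with e57 | e57 | e57
      ·
        have e58 : f (rr (-s) i (-u) k) = f (rr (-s) i t j) ∨ f (rr (-s) i (-u) k) = f (rr (-t) j (-u) k) :=
          tri hR hij hjk hik hs' ht hu' (by ring)
        have e59 : f (rr (-t) j (-u) k) = B := e58.elim (fun h => absurd (e57.symm.trans (h.symm.trans e6)) hAB) (fun h => h.symm.trans e6)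
        have e60 : f (rr (-s) i t j) = f (rr (-s) i (-1) d) ∨ f (rr (-s) i t j) = f (rr 1 d t j) :=
          tri hR hid (Ne.symm hjd) hij hs' hmone ht (by ring)
        rw [show (rr 1 d t j : Fin n → ℤ) = rr t j 1 d from rr_comm _ _ _ _] at e60
        have e61 : f (rr t j 1 d) = A := e60.elim (fun h => absurd (e56.symm.trans (h.symm.trans e57)) (Ne.symm hAB)) (fun h => h.symm.trans e57)
        have e62 : f (rr (-u) k 1 d) = f (rr (-u) k (-t) j) ∨ f (rr (-u) k 1 d) = f (rr t j 1 d) :=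
          tri hR (Ne.symm hjk) hjd hkd hu' ht' hone (by ring)
        rw [show (rr (-u) k (-t) j : Fin n → ℤ) = rr (-t) j (-u) k from rr_comm _ _ _ _] at e62
        exact e62.elim (fun h => absurd (e59.symm.trans (h.symm.trans e18)) hBC) (fun h => absurd (e61.symm.trans (h.symm.trans e18)) hAC)
      ·
        have e63 : f (rr t j (-u) k) = f (rr t j (-s) i) ∨ f (rr t j (-u) k) = f (rr s i (-u) k) :=
          tri hR (Ne.symm hij) hik hjk ht hs' hu' (by ring)
        rw [show (rr t j (-s) i : Fin n → ℤ) = rr (-s) i t j from rr_comm _ _ _ _] at e63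
        have e64 : f (rr s i (-u) k) = A := e63.elim (fun h => absurd (e57.symm.trans (h.symm.trans e4)) (Ne.symm hAB)) (fun h => h.symm.trans e4)
        have e65 : f (rr (-u) k 1 d) = f (rr (-u) k s i) ∨ f (rr (-u) k 1 d) = f (rr (-s) i 1 d) :=
          tri hR (Ne.symm hik) hid hkd hu' hs hone (by ring)
        rw [show (rr (-u) k s i : Fin n → ℤ) = rr s i (-u) k from rr_comm _ _ _ _] at e65
        have e66 : f (rr (-s) i 1 d) = C := e65.elim (fun h => absurd (e64.symm.trans (h.symm.trans e18)) hAC) (fun h => h.symm.trans e18)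
        have e67 : f (rr (-s) i t j) = f (rr (-s) i 1 d) ∨ f (rr (-s) i t j) = f (rr (-1) d t j) :=
          tri hR hid (Ne.symm hjd) hij hs' hone ht (by ring)
        rw [show (rr (-1) d t j : Fin n → ℤ) = rr t j (-1) d from rr_comm _ _ _ _] at e67
        exact e67.elim (fun h => absurd (e66.symm.trans (h.symm.trans e57)) (Ne.symm hBC)) (fun h => absurd (e54.symm.trans (h.symm.trans e57)) hAB)
      ·
        have e68 : f (rr t j (-1) d) = f (rr t j (-s) i) ∨ f (rr t j (-1) d) = f (rr s i (-1) d) :=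
          tri hR (Ne.symm hij) hid hjd ht hs' hmone (by ring)
        rw [show (rr t j (-s) i : Fin n → ℤ) = rr (-s) i t j from rr_comm _ _ _ _] at e68
        have e69 : f (rr s i (-1) d) = A := e68.elim (fun h => absurd (e57.symm.trans (h.symm.trans e54)) (Ne.symm hAC)) (fun h => h.symm.trans e54)
        have e70 : f (rr (-s) i u k) = f (rr (-s) i t j) ∨ f (rr (-s) i u k) = f (rr (-t) j u k) :=
          tri hR hij hjk hik hs' ht hu (by ring)
        have e71 : f (rr (-s) i u k) = C := e70.elim (fun h => h.trans e57) (fun h => h.trans hC)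
        have e72 : f (rr s i (-1) d) = f (rr s i u k) ∨ f (rr s i (-1) d) = f (rr (-u) k (-1) d) :=
          tri hR hik hkd hid hs hu hmone (by ring)
        have e73 : f (rr (-u) k (-1) d) = A := e72.elim (fun h => absurd (e2.symm.trans (h.symm.trans e69)) (Ne.symm hAC)) (fun h => h.symm.trans e69)
        have e74 : f (rr (-s) i (-1) d) = f (rr (-s) i u k) ∨ f (rr (-s) i (-1) d) = f (rr (-u) k (-1) d) :=
          tri hR hik hkd hid hs' hu hmone (by ring)
        exact e74.elim (fun h => absurd (e71.symm.trans (h.symm.trans e56)) (Ne.symm hBC)) (fun h => absurd (e73.symm.trans (h.symm.trans e56)) hAB)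

-- Step 1 machinery: if f is antipodally symmetric on roots, it is constant on roots.
section
variable {n : ℕ} {f : (Fin n → ℤ) → ℕ}
  (hR : ∀ p q, p ∈ rootsD n → q ∈ rootsD n → p + q ∈ rootsD n →
      f (p + q) = f p ∨ f (p + q) = f q)

include hR

lemma sum_color (H : ∀ v ∈ rootsD n, f v = f (-v)) {g h : Fin n → ℤ}
    (hg : g ∈ rootsD n) (hh : h ∈ rootsD n) (hs : g + h ∈ rootsD n) : f g = f h := by
  have e : g + h + -h = g := add_neg_cancel_right g h
  have e2 : g + h + -g = h := by rw [add_comm g h]; exact add_neg_cancel_right h g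
  have h2 := hR (g + h) (-h) hs (neg_mem_rootsD hh) (by rw [e]; exact hg)
  rw [e] at h2
  have h3 := hR (g + h) (-g) hs (neg_mem_rootsD hg) (by rw [e2]; exact hh)
  rw [e2] at h3
  rcases h2 with h2 | h2
  · rcases h3 with h3 | h3
    · exact h2.trans h3.symm
    · rw [← H g hg] at h3; exact h3.symm
  · rw [← H h hh] at h2; exact h2

lemma mixed (hn : 4 ≤ n) (H : ∀ v ∈ rootsD n, f v = f (-v)) {i j : Fin n} (hij : i ≠ j)
    {a b : ℤ} (ha : a = 1 ∨ a = -1) (hb : b = 1 ∨ b = -1) :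
    f (rr a i b j) = f (rr a i (-b) j) := by
  obtain ⟨m, hmi, hmj⟩ := exists_other (by omega) i j
  have hb' : -b = 1 ∨ -b = -1 := by omega
  have hone : (1:ℤ) = 1 ∨ (1:ℤ) = -1 := Or.inl rfl
  have hmone : (-1:ℤ) = 1 ∨ (-1:ℤ) = -1 := Or.inr rfl
  have h1 : f (rr a i b j) = f (rr (-b) j 1 m) := by
    have hadd : rr a i b j + rr (-b) j 1 m = rr a i 1 m := rr_add _ _ _ _ _ _ _ (by ring)
    exact sum_color hR H (mem_rootsD hij ha hb) (mem_rootsD (Ne.symm hmj) hb' hone)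
      (by rw [hadd]; exact mem_rootsD (Ne.symm hmi) ha hone)
  have h2 : f (rr a i (-b) j) = f (rr b j (-1) m) := by
    have hadd : rr a i (-b) j + rr b j (-1) m = rr a i (-1) m := rr_add _ _ _ _ _ _ _ (by ring)
    exact sum_color hR H (mem_rootsD hij ha hb') (mem_rootsD (Ne.symm hmj) hb hmone)
      (by rw [hadd]; exact mem_rootsD (Ne.symm hmi) ha hmone)
  have h3 : f (rr (-b) j 1 m) = f (rr b j (-1) m) := by
    have := H _ (mem_rootsD (Ne.symm hmj) hb' hone)
    rwa [rr_neg, neg_neg] at this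
  rw [h1, h3, ← h2]

lemma share1 (H : ∀ v ∈ rootsD n, f v = f (-v)) {i j l : Fin n}
    (hij : i ≠ j) (hjl : j ≠ l) (hil : i ≠ l)
    {a b e c : ℤ} (ha : a = 1 ∨ a = -1) (hb : b = 1 ∨ b = -1)
    (he : e = 1 ∨ e = -1) (hc : c = 1 ∨ c = -1) :
    f (rr a i b j) = f (rr e j c l) := by
  by_cases heb : e = -b
  · have hadd : rr a i b j + rr e j c l = rr a i c l := rr_add _ _ _ _ _ _ _ (by omega)
    exact sum_color hR H (mem_rootsD hij ha hb) (mem_rootsD hjl he hc)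
      (by rw [hadd]; exact mem_rootsD hil ha hc)
  · have heb' : e = b := by omega
    have hadd : rr a i b j + rr (-e) j (-c) l = rr a i (-c) l := rr_add _ _ _ _ _ _ _ (by omega)
    have h1 : f (rr a i b j) = f (rr (-e) j (-c) l) :=
      sum_color hR H (mem_rootsD hij ha hb) (mem_rootsD hjl (by omega) (by omega))
        (by rw [hadd]; exact mem_rootsD hil ha (by omega))
    have h2 : f (rr e j c l) = f (rr (-e) j (-c) l) := by
      have := H _ (mem_rootsD hjl he hc)
      rwa [rr_neg] at this
    exact h1.trans h2.symm

-- same-support comparison under H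
lemma samesuppH (hn : 4 ≤ n) (H : ∀ v ∈ rootsD n, f v = f (-v)) {i j : Fin n} (hij : i ≠ j)
    {a b c d : ℤ} (ha : a = 1 ∨ a = -1) (hb : b = 1 ∨ b = -1)
    (hc : c = 1 ∨ c = -1) (hd : d = 1 ∨ d = -1) :
    f (rr a i b j) = f (rr c i d j) := by
  by_cases hca : a = c
  · by_cases hdb : b = d
    · rw [← hca, ← hdb]
    · rw [← hca, show d = -b by omega]
      exact mixed hR hn H hij ha hb
  · by_cases hdb : b = d
    · rw [show c = -a by omega, ← hdb]
      have h2 : f (rr a i (-b) j) = f (rr (-a) i b j) := by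
        have := H _ (mem_rootsD hij ha (show -b = 1 ∨ -b = -1 by omega))
        rwa [rr_neg, neg_neg] at this
      rw [← h2]
      exact mixed hR hn H hij ha hb
    · rw [show c = -a by omega, show d = -b by omega]
      have h2 := H _ (mem_rootsD hij ha hb)
      rwa [rr_neg] at h2

lemma all_eq (hn : 4 ≤ n) (H : ∀ v ∈ rootsD n, f v = f (-v)) {g h : Fin n → ℤ}
    (hg : g ∈ rootsD n) (hh : h ∈ rootsD n) : f g = f h := by
  obtain ⟨i, j, a, b, hij, ha, hb, rfl⟩ := rootsD_repr hg
  obtain ⟨k, l, c, d, hkl, hc, hd, rfl⟩ := rootsD_repr hh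
  by_cases h1 : i = k
  · subst h1
    by_cases h2 : j = l
    · subst h2
      exact samesuppH hR hn H hij ha hb hc hd
    · -- shared index i only (l ≠ j, l ≠ i)
      rw [rr_comm a i b j]
      exact share1 hR H (Ne.symm hij) hkl h2 hb ha hc hd
  · by_cases h3 : j = k
    · subst h3
      by_cases h4 : i = l
      · subst h4
        rw [show (rr c j d i : Fin n → ℤ) = rr d i c j from rr_comm _ _ _ _]
        exact samesuppH hR hn H hij ha hb hd hc
      · -- shared index j only
        exact share1 hR H hij hkl h4 ha hb hc hd
    · by_cases h5 : i = l
      · subst h5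
        rw [show (rr c k d i : Fin n → ℤ) = rr d i c k from rr_comm _ _ _ _]
        rw [rr_comm a i b j]
        exact share1 hR H (Ne.symm hij) h1 h3 hb ha hd hc
      · by_cases h6 : j = l
        · subst h6
          rw [show (rr c k d j : Fin n → ℤ) = rr d j c k from rr_comm _ _ _ _]
          exact share1 hR H hij h3 h1 ha hb hd hc
        · -- disjoint
          have hz1 : rr a i b j + rr (-b) j (-c) k = rr a i (-c) k := rr_add _ _ _ _ _ _ _ (by ring)
          have hz2 : rr (-b) j (-c) k + rr c k d l = rr (-b) j d l := rr_add _ _ _ _ _ _ _ (by ring)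
          have hbneg : -b = 1 ∨ -b = -1 := by omega
          have hcneg : -c = 1 ∨ -c = -1 := by omega
          have e1 : f (rr a i b j) = f (rr (-b) j (-c) k) :=
            sum_color hR H (mem_rootsD hij ha hb)
              (mem_rootsD h3 hbneg hcneg)
              (by rw [hz1]; exact mem_rootsD h1 ha hcneg)
          have e2 : f (rr (-b) j (-c) k) = f (rr c k d l) :=
            sum_color hR H (mem_rootsD h3 hbneg hcneg)
              (mem_rootsD hkl hc hd)
              (by rw [hz2]; exact mem_rootsD h6 hbneg hd)
          exact e1.trans e2

end

lemma perm3 {A B C v : ℕ} (hA : A = 0 ∨ A = 1 ∨ A = 2) (hB : B = 0 ∨ B = 1 ∨ B = 2)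
    (hC : C = 0 ∨ C = 1 ∨ C = 2) (hv : v = 0 ∨ v = 1 ∨ v = 2)
    (hAB : A ≠ B) (hAC : A ≠ C) (hBC : B ≠ C) : v = A ∨ v = B ∨ v = C := by omega

section
variable {n : ℕ} {f : (Fin n → ℤ) → ℕ}
  (hR : ∀ p q, p ∈ rootsD n → q ∈ rootsD n → p + q ∈ rootsD n →
      f (p + q) = f p ∨ f (p + q) = f q)

include hR

lemma finish (hn : 4 ≤ n) {i j k : Fin n} (hij : i ≠ j) (hjk : j ≠ k) (hik : i ≠ k)
    {s t u : ℤ} (hs : s = 1 ∨ s = -1) (ht : t = 1 ∨ t = -1) (hu : u = 1 ∨ u = -1)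
    {A B C : ℕ}
    (hA : f (rr s i t j) = A) (hB : f (rr (-s) i (-t) j) = B) (hC : f (rr (-t) j u k) = C)
    (hAB : A ≠ B) (hAC : A ≠ C) (hBC : B ≠ C)
    (himg : ∀ v, f v = A ∨ f v = B ∨ f v = C) : False := by
  obtain ⟨d, hdi, hdj, hdk⟩ := exists_fourth hn i j k
  exact core hR hij hik (Ne.symm hdi) hjk (Ne.symm hdj) (Ne.symm hdk) hs ht hu
    hA hB hC hAB hAC hBC himg

lemma samesupp3 (hn : 4 ≤ n) {i j : Fin n} (hij : i ≠ j)
    {a b c d : ℤ} (ha : a = 1 ∨ a = -1) (hb : b = 1 ∨ b = -1)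
    (hc : c = 1 ∨ c = -1) (hd : d = 1 ∨ d = -1)
    {A B G : ℕ}
    (hA : f (rr a i b j) = A) (hB : f (rr (-a) i (-b) j) = B) (hG : f (rr c i d j) = G)
    (hAB : A ≠ B) (hGA : G ≠ A) (hGB : G ≠ B)
    (himg : ∀ v, f v = A ∨ f v = B ∨ f v = G) : False := by
  obtain ⟨m, hmi, hmj⟩ := exists_other (by omega) i j
  have hone : (1:ℤ) = 1 ∨ (1:ℤ) = -1 := Or.inl rfl
  have hmone : (-1:ℤ) = 1 ∨ (-1:ℤ) = -1 := Or.inr rfl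
  have hbneg : -b = 1 ∨ -b = -1 := by omega
  have haneg : -a = 1 ∨ -a = -1 := by omega
  by_cases hca : c = a
  · by_cases hdb : d = b
    · exact hGA (by rw [← hG, ← hA, hca, hdb])
    · have hdb' : d = -b := by omega
      have hGval : f (rr a i (-b) j) = G := by rw [← hG, hca, hdb']
      have hpq : rr a i 1 m + rr (-1) m (-b) j = rr a i (-b) j := rr_add _ _ _ _ _ _ _ (by ring)
      have hsplit := hR _ _ (mem_rootsD (Ne.symm hmi) ha hone) (mem_rootsD hmj hmone hbneg)
        (by rw [hpq]; exact mem_rootsD hij ha hbneg)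
      rw [hpq] at hsplit
      rcases hsplit with hp | hq
      · have hxw : rr a i b j + rr (-b) j 1 m = rr a i 1 m := rr_add _ _ _ _ _ _ _ (by ring)
        have hfw := hR _ _ (mem_rootsD hij ha hb) (mem_rootsD (Ne.symm hmj) hbneg hone)
          (by rw [hxw]; exact mem_rootsD (Ne.symm hmi) ha hone)
        rw [hxw] at hfw
        rcases hfw with h1 | h1
        · exact hGA (hGval.symm.trans (hp.trans (h1.trans hA)))
        · exact finish hR hn hij (Ne.symm hmj) (Ne.symm hmi) ha hb hone hA hB
            (h1.symm.trans (hp.symm.trans hGval)) hAB (Ne.symm hGA) (Ne.symm hGB) himg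
      · have hC2 : f (rr (-b) j (-1) m) = G := by rw [rr_comm]; exact hq.symm.trans hGval
        exact finish hR hn hij (Ne.symm hmj) (Ne.symm hmi) ha hb hmone hA hB hC2
          hAB (Ne.symm hGA) (Ne.symm hGB) himg
  · have hca' : c = -a := by omega
    have hA' : f (rr b j a i) = A := by rw [rr_comm]; exact hA
    have hB' : f (rr (-b) j (-a) i) = B := by rw [rr_comm]; exact hB
    by_cases hdb : d = b
    · have hGval : f (rr (-a) i b j) = G := by rw [← hG, hca', hdb]
      have hpq : rr (-a) i 1 m + rr (-1) m b j = rr (-a) i b j := rr_add _ _ _ _ _ _ _ (by ring)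
      have hsplit := hR _ _ (mem_rootsD (Ne.symm hmi) haneg hone) (mem_rootsD hmj hmone hb)
        (by rw [hpq]; exact mem_rootsD hij haneg hb)
      rw [hpq] at hsplit
      rcases hsplit with hp | hq
      · exact finish hR hn (Ne.symm hij) (Ne.symm hmi) (Ne.symm hmj) hb ha hone hA' hB'
          (hp.symm.trans hGval) hAB (Ne.symm hGA) (Ne.symm hGB) himg
      · have hxw : rr b j a i + rr (-a) i (-1) m = rr b j (-1) m := rr_add _ _ _ _ _ _ _ (by ring)
        have hfw := hR _ _ (mem_rootsD (Ne.symm hij) hb ha) (mem_rootsD (Ne.symm hmi) haneg hmone)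
          (by rw [hxw]; exact mem_rootsD (Ne.symm hmj) hb hmone)
        rw [hxw] at hfw
        have hqG : f (rr b j (-1) m) = G := by rw [rr_comm]; exact hq.symm.trans hGval
        rcases hfw with h1 | h1
        · exact hGA (hqG.symm.trans (h1.trans hA'))
        · exact finish hR hn (Ne.symm hij) (Ne.symm hmi) (Ne.symm hmj) hb ha hmone hA' hB'
            (h1.symm.trans hqG) hAB (Ne.symm hGA) (Ne.symm hGB) himg
    · have : f (rr (-a) i (-b) j) = G := by rw [← hG, hca', show d = -b by omega]
      exact hGB (this.symm.trans hB)

lemma shareone3 (hn : 4 ≤ n) {i j l : Fin n} (hij : i ≠ j) (hjl : j ≠ l) (hil : i ≠ l)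
    {a b e c : ℤ} (ha : a = 1 ∨ a = -1) (hb : b = 1 ∨ b = -1)
    (he : e = 1 ∨ e = -1) (hc : c = 1 ∨ c = -1)
    {A B G : ℕ}
    (hA : f (rr a i b j) = A) (hB : f (rr (-a) i (-b) j) = B) (hG : f (rr e j c l) = G)
    (hAB : A ≠ B) (hGA : G ≠ A) (hGB : G ≠ B)
    (himg : ∀ v, f v = A ∨ f v = B ∨ f v = G) : False := by
  by_cases heb : e = -b
  · have hG' : f (rr (-b) j c l) = G := by rw [← heb]; exact hG
    exact finish hR hn hij hjl hil ha hb hc hA hB hG' hAB (Ne.symm hGA) (Ne.symm hGB) himg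
  · have heb' : e = b := by omega
    have haneg : -a = 1 ∨ -a = -1 := by omega
    have hxw : rr b j a i + rr (-a) i c l = rr b j c l := rr_add _ _ _ _ _ _ _ (by ring)
    have hfw := hR _ _ (mem_rootsD (Ne.symm hij) hb ha) (mem_rootsD hil haneg hc)
      (by rw [hxw]; exact mem_rootsD hjl hb hc)
    rw [hxw] at hfw
    have hGval : f (rr b j c l) = G := by rw [← heb']; exact hG
    have hA' : f (rr b j a i) = A := by rw [rr_comm]; exact hA
    have hB' : f (rr (-b) j (-a) i) = B := by rw [rr_comm]; exact hB
    rcases hfw with h1 | h1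
    · exact hGA (hGval.symm.trans (h1.trans hA'))
    · exact finish hR hn (Ne.symm hij) hil hjl hb ha hc hA' hB'
        (h1.symm.trans hGval) hAB (Ne.symm hGA) (Ne.symm hGB) himg

lemma disjoint3 (hn : 4 ≤ n) {i j k l : Fin n}
    (hij : i ≠ j) (hik : i ≠ k) (hil : i ≠ l) (hjk : j ≠ k) (hjl : j ≠ l) (hkl : k ≠ l)
    {a b c d : ℤ} (ha : a = 1 ∨ a = -1) (hb : b = 1 ∨ b = -1)
    (hc : c = 1 ∨ c = -1) (hd : d = 1 ∨ d = -1)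
    {A B G : ℕ}
    (hA : f (rr a i b j) = A) (hB : f (rr (-a) i (-b) j) = B) (hG : f (rr c k d l) = G)
    (hAB : A ≠ B) (hGA : G ≠ A) (hGB : G ≠ B)
    (himg : ∀ v, f v = A ∨ f v = B ∨ f v = G) : False := by
  have haneg : -a = 1 ∨ -a = -1 := by omega
  have hbneg : -b = 1 ∨ -b = -1 := by omega
  have hpq : rr c k (-a) i + rr a i d l = rr c k d l := rr_add _ _ _ _ _ _ _ (by ring)
  have hsplit := hR _ _ (mem_rootsD (Ne.symm hik) hc haneg) (mem_rootsD hil ha hd)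
    (by rw [hpq]; exact mem_rootsD hkl hc hd)
  rw [hpq] at hsplit
  rcases hsplit with hp | hq
  · have hA' : f (rr b j a i) = A := by rw [rr_comm]; exact hA
    have hB' : f (rr (-b) j (-a) i) = B := by rw [rr_comm]; exact hB
    have hC' : f (rr (-a) i c k) = G := by rw [rr_comm]; exact hp.symm.trans hG
    exact finish hR hn (Ne.symm hij) hik hjk hb ha hc hA' hB' hC'
      hAB (Ne.symm hGA) (Ne.symm hGB) himg
  · have hxw : rr a i b j + rr (-b) j d l = rr a i d l := rr_add _ _ _ _ _ _ _ (by ring)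
    have hfw := hR _ _ (mem_rootsD hij ha hb) (mem_rootsD hjl hbneg hd)
      (by rw [hxw]; exact mem_rootsD hil ha hd)
    rw [hxw] at hfw
    rcases hfw with h1 | h1
    · exact hGA (hG.symm.trans (hq.trans (h1.trans hA)))
    · exact finish hR hn hij hjl hil ha hb hd hA hB
        (h1.symm.trans (hq.symm.trans hG)) hAB (Ne.symm hGA) (Ne.symm hGB) himg

lemma no_three (hn : 4 ≤ n) (hf3 : ∀ v, f v = 0 ∨ f v = 1 ∨ f v = 2)
    {x y : Fin n → ℤ} (hx : x ∈ rootsD n) (hy : y ∈ rootsD n)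
    (hxneg : f x ≠ f (-x)) (h1 : f y ≠ f x) (h2 : f y ≠ f (-x)) : False := by
  have himg : ∀ v, f v = f x ∨ f v = f (-x) ∨ f v = f y :=
    fun v => perm3 (hf3 x) (hf3 (-x)) (hf3 y) (hf3 v) hxneg (Ne.symm h1) (Ne.symm h2)
  obtain ⟨i, j, a, b, hij, ha, hb, rfl⟩ := rootsD_repr hx
  obtain ⟨k, l, c, d, hkl, hc, hd, rfl⟩ := rootsD_repr hy
  simp only [rr_neg] at himg hxneg h2
  by_cases e1 : i = k
  · subst e1
    by_cases e2 : j = l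
    · subst e2
      exact samesupp3 hR hn hij ha hb hc hd rfl rfl rfl hxneg h1 h2 himg
    · exact shareone3 hR hn (Ne.symm hij) hkl e2 hb ha hc hd
        (congrArg f (rr_comm b j a i)) (congrArg f (rr_comm (-b) j (-a) i)) rfl
        hxneg h1 h2 himg
  · by_cases e3 : j = k
    · subst e3
      by_cases e4 : i = l
      · subst e4
        exact samesupp3 hR hn hij ha hb hd hc rfl rfl (congrArg f (rr_comm d i c j))
          hxneg h1 h2 himg
      · exact shareone3 hR hn hij hkl e4 ha hb hc hd rfl rfl rfl hxneg h1 h2 himg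
    · by_cases e5 : i = l
      · subst e5
        exact shareone3 hR hn (Ne.symm hij) e1 e3 hb ha hd hc
          (congrArg f (rr_comm b j a i)) (congrArg f (rr_comm (-b) j (-a) i))
          (congrArg f (rr_comm d i c k)) hxneg h1 h2 himg
      · by_cases e6 : j = l
        · subst e6
          exact shareone3 hR hn hij e3 e1 ha hb hd hc rfl rfl
            (congrArg f (rr_comm d j c k)) hxneg h1 h2 himg
        · exact disjoint3 hR hn hij e1 e5 e3 e6 hkl ha hb hc hd rfl rfl rfl
            hxneg h1 h2 himg

end

theorem stmt7 (n : ℕ) (hn : 4 ≤ n) (m : ℕ) (hm : 3 ≤ m) :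
    ¬ ∃ P : Fin m → Set (Fin n → ℤ),
      (⋃ i, P i) = rootsD n ∧
      (∀ i, (P i).Nonempty) ∧
      (Pairwise fun i j => Disjoint (P i) (P j)) ∧
      (∀ i, RootClosed (rootsD n) (P i)) ∧
      (∀ i j, i ≠ j → RootClosed (rootsD n) (P i ∪ P j)) := by
  rintro ⟨P, hcover, hne, hdisj, hcl1, hcl2⟩
  classical
  set i0 : Fin m := ⟨0, by omega⟩ with hi0
  set i1 : Fin m := ⟨1, by omega⟩ with hi1
  set i2 : Fin m := ⟨2, by omega⟩ with hi2
  have h01 : i0 ≠ i1 := Fin.ne_of_val_ne (by norm_num)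
  have h02 : i0 ≠ i2 := Fin.ne_of_val_ne (by norm_num)
  have h12 : i1 ≠ i2 := Fin.ne_of_val_ne (by norm_num)
  set f : (Fin n → ℤ) → ℕ :=
    fun v => if v ∈ P i0 then 0 else if v ∈ P i1 then 1 else 2 with hfdef
  have hval : ∀ (i : Fin m) (v : Fin n → ℤ), v ∈ P i →
      f v = if i = i0 then 0 else if i = i1 then 1 else 2 := by
    intro i v hv
    by_cases hI0 : i = i0
    · subst hI0
      simp only [hfdef, if_pos hv, if_pos rfl]
      simp
    · have hv0 : v ∉ P i0 := fun hmem => Set.disjoint_left.mp (hdisj hI0) hv hmem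
      by_cases hI1 : i = i1
      · subst hI1
        simp only [hfdef, if_neg hv0, if_pos hv, if_neg hI0, if_pos rfl]
        simp
      · have hv1 : v ∉ P i1 := fun hmem => Set.disjoint_left.mp (hdisj hI1) hv hmem
        simp only [hfdef, if_neg hv0, if_neg hv1, if_neg hI0, if_neg hI1]
  have hf3 : ∀ v, f v = 0 ∨ f v = 1 ∨ f v = 2 := by
    intro v
    simp only [hfdef]
    split_ifs <;> simp
  have hR : ∀ p q, p ∈ rootsD n → q ∈ rootsD n → p + q ∈ rootsD n →
      f (p + q) = f p ∨ f (p + q) = f q := by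
    intro p q hp hq hs
    obtain ⟨ip, hpP⟩ := Set.mem_iUnion.mp (show p ∈ ⋃ i, P i by rw [hcover]; exact hp)
    obtain ⟨iq, hqP⟩ := Set.mem_iUnion.mp (show q ∈ ⋃ i, P i by rw [hcover]; exact hq)
    by_cases hpq : ip = iq
    · subst hpq
      have hsum := hcl1 ip p hpP q hqP hs
      left; rw [hval ip _ hsum, hval ip _ hpP]
    · have hsum := hcl2 ip iq hpq p (Or.inl hpP) q (Or.inr hqP) hs
      rcases hsum with hsum | hsum
      · left; rw [hval ip _ hsum, hval ip _ hpP]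
      · right; rw [hval iq _ hsum, hval iq _ hqP]
  obtain ⟨v0, hv0⟩ := hne i0
  obtain ⟨v1, hv1⟩ := hne i1
  obtain ⟨v2, hv2⟩ := hne i2
  have hv0D : v0 ∈ rootsD n := by rw [← hcover]; exact Set.mem_iUnion.mpr ⟨i0, hv0⟩
  have hv1D : v1 ∈ rootsD n := by rw [← hcover]; exact Set.mem_iUnion.mpr ⟨i1, hv1⟩
  have hv2D : v2 ∈ rootsD n := by rw [← hcover]; exact Set.mem_iUnion.mpr ⟨i2, hv2⟩
  have hc0 : f v0 = 0 := by rw [hval i0 v0 hv0, if_pos rfl]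
  have hc1 : f v1 = 1 := by rw [hval i1 v1 hv1, if_neg (Ne.symm h01), if_pos rfl]
  have hc2 : f v2 = 2 := by
    rw [hval i2 v2 hv2, if_neg (Ne.symm h02), if_neg (Ne.symm h12)]
  by_cases Hx : ∃ x ∈ rootsD n, f x ≠ f (-x)
  · obtain ⟨x, hxD, hxne⟩ := Hx
    obtain ⟨y, hyD, hy1, hy2⟩ : ∃ y ∈ rootsD n, f y ≠ f x ∧ f y ≠ f (-x) := by
      rcases hf3 x with hx0 | hx0 | hx0 <;> rcases hf3 (-x) with hy0 | hy0 | hy0 <;>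
        first
          | exact absurd (hx0.trans hy0.symm) hxne
          | exact ⟨v0, hv0D, by rw [hc0, hx0]; decide, by rw [hc0, hy0]; decide⟩
          | exact ⟨v1, hv1D, by rw [hc1, hx0]; decide, by rw [hc1, hy0]; decide⟩
          | exact ⟨v2, hv2D, by rw [hc2, hx0]; decide, by rw [hc2, hy0]; decide⟩
    exact no_three hR hn hf3 hxD hyD hxne hy1 hy2
  · push_neg at Hx
    have heq := all_eq hR hn Hx hv0D hv1D
    rw [hc0, hc1] at heq
    exact absurd heq (by decide)
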